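/- The only isotropic cycles in F are the nonzero constant functions and the zero circles, i.e., nonzero scalar multiples of functions of the form (X − m)·(X − m) for m ∈ E. -/

import Mathlib

/-- The only isotropic cycles are the nonzero constant functions and the nonzero scalar
multiples of zero circles `(X − m)·(X − m)`. -/
theorem stmt_5 {k : Type*} [Field k] (hchar : (2 : k) ≠ 0)
    {E : Type*} [AddCommGroup E] [Module k E]
    (B : LinearMap.BilinForm k E) (hB : B.IsSymm)
    (haniso : ∀ x : E, B x x = 0 → x = 0)
    (cyc : (k × E × k) → (k × E × k) → k)
    (hcyc : ∀ p q : k × E × k,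
      cyc p q = B p.2.1 q.2.1 - 2 * p.1 * q.2.2 - 2 * q.1 * p.2.2)
    (p : k × E × k) (hp : p ≠ 0) :
    cyc p p = 0 ↔
      ((p.1 = 0 ∧ p.2.1 = 0 ∧ p.2.2 ≠ 0) ∨
        ∃ (u : k) (m : E), u ≠ 0 ∧ p = u • ((1 : k), -((2 : k) • m), B m m)) := by
  obtain ⟨a, b, c⟩ := p
  rw [hcyc]
  simp only [Prod.smul_mk, Prod.mk.injEq, smul_eq_mul, smul_neg, smul_smul]
  constructor
  · intro h
    by_cases ha : a = 0
    · left
      have hb : b = 0 := by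
        apply haniso
        rw [ha] at h
        linear_combination h
      refine ⟨ha, hb, ?_⟩
      intro hc
      exact hp (by simp [ha, hb, hc, Prod.ext_iff])
    · right
      refine ⟨a, -((2 * a)⁻¹ • b), ha, ?_⟩
      have h2a : (2 * a) ≠ 0 := mul_ne_zero hchar ha
      refine ⟨by ring, ?_, ?_⟩
      · rw [smul_neg, smul_smul, neg_neg]
        rw [show a * 2 * (2 * a)⁻¹ = 1 by field_simp]
        rw [one_smul]
      · simp only [map_neg, LinearMap.neg_apply, neg_neg, map_smul, LinearMap.smul_apply,
          smul_eq_mul]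
        field_simp
        linear_combination -h
  · rintro (⟨ha, hb, hc⟩ | ⟨u, m, hu, ha, hb, hc⟩)
    · simp [ha, hb]
    · subst hb hc
      simp only [map_neg, LinearMap.neg_apply, neg_neg, map_smul, LinearMap.smul_apply,
        smul_eq_mul]
      rw [ha]
      ring
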